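/- Let g ≥ 2 and τ = (τ_{ij}) ∈ M_g(ℂ) with det(Im τ) ≠ 0. If [F_τ : ℚ] = 4, then g ≤ ρ(τ) < g². -/

import Mathlib

open Matrix Module IntermediateField
open scoped ComplexOrder

noncomputable section

/-- The period matrix `Π(τ) = (τ | I_g)`, a `g × 2g` complex matrix. -/
def PeriodMatrix (g : ℕ) (τ : Matrix (Fin g) (Fin g) ℂ) :
    Matrix (Fin g) (Fin g ⊕ Fin g) ℂ :=
  Matrix.fromCols τ 1

/-- `F_τ`: the subfield of `ℂ` generated over `ℚ` by the entries of `τ`. -/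
def EntryField (g : ℕ) (τ : Matrix (Fin g) (Fin g) ℂ) : IntermediateField ℚ ℂ :=
  IntermediateField.adjoin ℚ {x : ℂ | ∃ i j, τ i j = x}

/-- Entrywise inclusion `ℚ → ℂ` on square matrices, as an algebra homomorphism. -/
def mapQC (g : ℕ) : Matrix (Fin g) (Fin g) ℚ →ₐ[ℚ] Matrix (Fin g) (Fin g) ℂ :=
  (Algebra.ofId ℚ ℂ).mapMatrix

/-- The ℚ-vector space `N(τ)` of triples `(A,B,C)` of rational `g × g` matrices with
`A, C` skew-symmetric and `A - Bτ + τᵗBᵗ + τᵗCτ = 0`; its dimension is the Picard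
number of the complex torus `X_τ`. -/
def NSSpace (g : ℕ) (τ : Matrix (Fin g) (Fin g) ℂ) :
    Submodule ℚ (Matrix (Fin g) (Fin g) ℚ × Matrix (Fin g) (Fin g) ℚ ×
      Matrix (Fin g) (Fin g) ℚ) where
  carrier := {x | x.1ᵀ = -x.1 ∧ x.2.2ᵀ = -x.2.2 ∧
    mapQC g x.1 - mapQC g x.2.1 * τ + τᵀ * (mapQC g x.2.1)ᵀ + τᵀ * mapQC g x.2.2 * τ = 0}
  add_mem' := by
    rintro a b ⟨ha1, ha2, ha3⟩ ⟨hb1, hb2, hb3⟩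
    refine ⟨by simp [Matrix.transpose_add, ha1, hb1]; abel,
      by simp [Matrix.transpose_add, ha2, hb2]; abel, ?_⟩
    have key : mapQC g (a + b).1 - mapQC g (a + b).2.1 * τ + τᵀ * (mapQC g (a + b).2.1)ᵀ
        + τᵀ * mapQC g (a + b).2.2 * τ
        = (mapQC g a.1 - mapQC g a.2.1 * τ + τᵀ * (mapQC g a.2.1)ᵀ + τᵀ * mapQC g a.2.2 * τ)
        + (mapQC g b.1 - mapQC g b.2.1 * τ + τᵀ * (mapQC g b.2.1)ᵀ
          + τᵀ * mapQC g b.2.2 * τ) := by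
      simp only [Prod.fst_add, Prod.snd_add, map_add, Matrix.add_mul, Matrix.mul_add,
        Matrix.transpose_add]
      abel
    rw [key, ha3, hb3, add_zero]
  zero_mem' := by
    refine ⟨by simp, by simp, ?_⟩
    simp
  smul_mem' := by
    rintro q a ⟨ha1, ha2, ha3⟩
    refine ⟨by simp [Matrix.transpose_smul, ha1], by simp [Matrix.transpose_smul, ha2], ?_⟩
    have key : mapQC g (q • a).1 - mapQC g (q • a).2.1 * τ + τᵀ * (mapQC g (q • a).2.1)ᵀ
        + τᵀ * mapQC g (q • a).2.2 * τ
        = q • (mapQC g a.1 - mapQC g a.2.1 * τ + τᵀ * (mapQC g a.2.1)ᵀ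
          + τᵀ * mapQC g a.2.2 * τ) := by
      simp only [Prod.smul_fst, Prod.smul_snd, _root_.map_smul, Matrix.transpose_smul,
        smul_mul_assoc, mul_smul_comm]
      module
    rw [key, ha3, smul_zero]

/-- The Picard number `ρ(τ) = dim_ℚ N(τ)` of the complex torus `X_τ`. -/
def picard (g : ℕ) (τ : Matrix (Fin g) (Fin g) ℂ) : ℕ :=
  Module.finrank ℚ (NSSpace g τ)


lemma indep_base_change {ι : Type*} [Fintype ι] [DecidableEq ι] {r : ℕ}
    (v : Fin r → ι → ℚ) (hv : LinearIndependent ℚ v) :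
    LinearIndependent ℂ (fun i (t : ι) => ((v i t : ℚ) : ℂ)) := by
  classical
  set B : Matrix ι (Fin r) ℚ := Matrix.of fun t i => v i t with hB
  have hker : LinearMap.ker B.mulVecLin = ⊥ := by
    rw [Submodule.eq_bot_iff]
    intro c hc
    rw [LinearMap.mem_ker] at hc
    have h0 : ∑ i, c i • v i = 0 := by
      funext t
      have := congrFun hc t
      simpa [Matrix.mulVecLin_apply, Matrix.mulVec, dotProduct, hB,
        mul_comm] using this
    funext i
    exact Fintype.linearIndependent_iff.mp hv c h0 i
  obtain ⟨G, hG⟩ := (B.mulVecLin).exists_leftInverse_of_injective hker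
  have hGm : (LinearMap.toMatrix' G) * B = 1 := by
    have : LinearMap.toMatrix' (G.comp B.mulVecLin) = 1 := by
      rw [hG, LinearMap.toMatrix'_id]
    rwa [LinearMap.toMatrix'_comp, ← Matrix.toLin'_apply', LinearMap.toMatrix'_toLin'] at this
  set q : ℚ →+* ℂ := algebraMap ℚ ℂ with hq
  have h1 : ((LinearMap.toMatrix' G).map q) * (B.map q) = 1 := by
    rw [← Matrix.map_mul, hGm]
    exact Matrix.map_one q (map_zero q) (map_one q)
  rw [Fintype.linearIndependent_iff]
  intro c hc i
  have hBc : (B.map q) *ᵥ c = 0 := by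
    funext t
    have := congrFun hc t
    simp only [Finset.sum_apply, Pi.smul_apply, smul_eq_mul, Pi.zero_apply] at this
    simp only [Matrix.mulVec, dotProduct, Matrix.map_apply, hB, Matrix.of_apply,
      Pi.zero_apply]
    rw [← this]
    refine Finset.sum_congr rfl fun j _ => ?_
    simp [hB, hq, mul_comm]
  have h2 : ((LinearMap.toMatrix' G).map q) *ᵥ ((B.map q) *ᵥ c) = c := by
    rw [Matrix.mulVec_mulVec, h1, Matrix.one_mulVec]
  rw [hBc, Matrix.mulVec_zero] at h2
  exact congrFun h2.symm i


lemma card_strict_upper (g : ℕ) :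
    Fintype.card {p : Fin g × Fin g // p.1 < p.2} +
      Fintype.card {p : Fin g × Fin g // p.1 < p.2} + g = g * g := by
  classical
  have h1 : Fintype.card {p : Fin g × Fin g // p.1 < p.2}
      = (Finset.univ.filter (fun p : Fin g × Fin g => p.1 < p.2)).card :=
    Fintype.card_subtype _
  have hswap : (Finset.univ.filter (fun p : Fin g × Fin g => p.1 < p.2)).card
      = (Finset.univ.filter (fun p : Fin g × Fin g => p.2 < p.1)).card := by
    refine Finset.card_bij' (fun a _ => Prod.swap a) (fun a _ => Prod.swap a) ?_ ?_ ?_ ?_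
    · intro a ha
      simp only [Finset.mem_filter, Finset.mem_univ, true_and] at ha ⊢
      simpa using ha
    · intro a ha
      simp only [Finset.mem_filter, Finset.mem_univ, true_and] at ha ⊢
      simpa using ha
    · intro a _; simp
    · intro a _; simp
  have hpart := Finset.card_filter_add_card_filter_not
    (s := (Finset.univ : Finset (Fin g × Fin g))) (p := fun p => p.1 < p.2)
  have hneg : (Finset.univ.filter (fun p : Fin g × Fin g => ¬ p.1 < p.2)).card
      = (Finset.univ.filter (fun p : Fin g × Fin g => p.2 < p.1)).card + g := by
    have hsplit : (Finset.univ.filter (fun p : Fin g × Fin g => ¬ p.1 < p.2))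
        = (Finset.univ.filter (fun p : Fin g × Fin g => p.2 < p.1)) ∪
          (Finset.univ.filter (fun p : Fin g × Fin g => p.1 = p.2)) := by
      rw [← Finset.filter_or]
      apply Finset.filter_congr
      intro p _
      constructor
      · intro h
        rcases lt_or_eq_of_le (not_lt.mp h) with h' | h'
        · exact Or.inl h'
        · exact Or.inr h'.symm
      · rintro (h | h)
        · exact asymm h
        · exact fun hc => absurd h (ne_of_lt hc)
    rw [hsplit, Finset.card_union_of_disjoint]
    · have hd : (Finset.univ.filter (fun p : Fin g × Fin g => p.1 = p.2)).card
          = (Finset.univ : Finset (Fin g)).card := by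
        refine Finset.card_bij' (fun (a : Fin g × Fin g) _ => a.1) (fun i _ => (i, i)) ?_ ?_ ?_ ?_
        · intro a _; simp
        · intro i _; simp
        · intro a ha
          simp only [Finset.mem_filter, Finset.mem_univ, true_and] at ha
          simp [Prod.ext_iff, ha.symm]
        · intro i _; rfl
      rw [hd, Finset.card_univ, Fintype.card_fin]
    · rw [Finset.disjoint_filter]
      intro p _ h
      simp [h.ne']
  have hcard : (Finset.univ : Finset (Fin g × Fin g)).card = g * g := by simp
  omega


abbrev MC (g : ℕ) := Matrix (Fin g) (Fin g) ℂ
abbrev DC (g : ℕ) := MC g × MC g × MC g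

variable {g : ℕ}

def Qmap (ν ν' : MC g) : DC g →ₗ[ℂ] MC g where
  toFun x := x.1 - x.2.1 * ν' + νᵀ * x.2.1ᵀ + νᵀ * x.2.2 * ν'
  map_add' x y := by
    simp only [Prod.fst_add, Prod.snd_add, Matrix.add_mul, Matrix.mul_add, Matrix.transpose_add]
    abel
  map_smul' c x := by
    simp only [Prod.smul_fst, Prod.smul_snd, Matrix.transpose_smul, Matrix.smul_mul,
      Matrix.mul_smul, RingHom.id_apply]
    module

lemma Qmap_apply (ν ν' : MC g) (x : DC g) :
    Qmap ν ν' x = x.1 - x.2.1 * ν' + νᵀ * x.2.1ᵀ + νᵀ * x.2.2 * ν' := rfl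

def skewA : DC g →ₗ[ℂ] MC g where
  toFun x := x.1ᵀ + x.1
  map_add' x y := by simp only [Prod.fst_add, Matrix.transpose_add]; abel
  map_smul' c x := by simp only [Prod.smul_fst, Matrix.transpose_smul, RingHom.id_apply, smul_add]

def skewC : DC g →ₗ[ℂ] MC g where
  toFun x := x.2.2ᵀ + x.2.2
  map_add' x y := by simp only [Prod.snd_add, Matrix.transpose_add]; abel
  map_smul' c x := by simp only [Prod.smul_snd, Matrix.transpose_smul, RingHom.id_apply, smul_add]

def Gmap (U V : MC g) : MC g →ₗ[ℂ] MC g where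
  toFun X := U * X * Vᵀ - V * Xᵀ * Uᵀ
  map_add' X Y := by
    simp only [Matrix.transpose_add, Matrix.add_mul, Matrix.mul_add]
    abel
  map_smul' c X := by
    simp only [Matrix.transpose_smul, Matrix.smul_mul, Matrix.mul_smul, RingHom.id_apply]
    module

def KC (τ' σ' μ' : MC g) : Submodule ℂ (DC g) :=
  LinearMap.ker skewA ⊓ LinearMap.ker skewC ⊓ LinearMap.ker (Qmap τ' τ') ⊓
    LinearMap.ker (Qmap σ' σ') ⊓ LinearMap.ker (Qmap μ' μ')

lemma Q_transpose (τ' σ' : MC g) (x : DC g) (hA : x.1ᵀ = -x.1) (hC : x.2.2ᵀ = -x.2.2) :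
    (Qmap τ' σ' x)ᵀ = - Qmap σ' τ' x := by
  simp only [Qmap_apply, Matrix.transpose_add, Matrix.transpose_sub, Matrix.transpose_mul,
    Matrix.transpose_transpose, hA, hC]
  noncomm_ring

lemma Q_decompose (τ' σ' μ' U : MC g) (hμ : μ' = τ' * Uᵀ + σ' * (1 - U)ᵀ) (x : DC g) :
    Qmap μ' μ' x = U * (Qmap τ' τ' x) * Uᵀ + U * (Qmap τ' σ' x) * (1 - U)ᵀ
      + (1 - U) * (Qmap σ' τ' x) * Uᵀ + (1 - U) * (Qmap σ' σ' x) * (1 - U)ᵀ := by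
  simp only [Qmap_apply]
  rw [hμ]
  simp only [Matrix.transpose_add, Matrix.transpose_sub, Matrix.transpose_mul,
    Matrix.transpose_transpose, Matrix.transpose_one]
  noncomm_ring

lemma triple_eq_zero {τ' σ' : MC g} (hdet : (τ' - σ').det ≠ 0) (x : DC g)
    (h1 : Qmap τ' τ' x = 0) (h2 : Qmap τ' σ' x = 0) (h3 : Qmap σ' τ' x = 0)
    (h4 : Qmap σ' σ' x = 0) : x = 0 := by
  obtain ⟨A, B, C⟩ := x
  set P : Matrix (Fin g ⊕ Fin g) (Fin g ⊕ Fin g) ℂ := Matrix.fromBlocks τ'ᵀ 1 σ'ᵀ 1 with hP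
  set J : Matrix (Fin g ⊕ Fin g) (Fin g ⊕ Fin g) ℂ := Matrix.fromBlocks C Bᵀ (-B) A with hJdef
  have hPJP : P * J * Pᵀ = Matrix.fromBlocks (Qmap τ' τ' (A, B, C)) (Qmap τ' σ' (A, B, C))
      (Qmap σ' τ' (A, B, C)) (Qmap σ' σ' (A, B, C)) := by
    rw [hP, hJdef, Matrix.fromBlocks_transpose, Matrix.fromBlocks_multiply,
      Matrix.fromBlocks_multiply, Matrix.fromBlocks_inj]
    refine ⟨?_, ?_, ?_, ?_⟩ <;> · simp only [Qmap_apply, Matrix.transpose_transpose, Matrix.transpose_one]; noncomm_ring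
  have hPdet : IsUnit P.det := by
    rw [hP, Matrix.det_fromBlocks_one₂₂]
    have h5 : τ'ᵀ - 1 * σ'ᵀ = (τ' - σ')ᵀ := by rw [Matrix.one_mul, Matrix.transpose_sub]
    rw [h5, Matrix.det_transpose]
    exact hdet.isUnit
  have hz : P * (J * Pᵀ) = 0 := by
    rw [← Matrix.mul_assoc, hPJP, h1, h2, h3, h4, Matrix.fromBlocks_zero]
  have h5 : J * Pᵀ = 0 := by
    calc J * Pᵀ = P⁻¹ * (P * (J * Pᵀ)) := (Matrix.nonsing_inv_mul_cancel_left _ _ hPdet).symm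
    _ = 0 := by rw [hz, Matrix.mul_zero]
  have hPT : IsUnit (Pᵀ).det := by rwa [Matrix.det_transpose]
  have hJ : J = 0 := by
    calc J = J * Pᵀ * Pᵀ⁻¹ := (Matrix.mul_nonsing_inv_cancel_right _ _ hPT).symm
    _ = 0 := by rw [h5, Matrix.zero_mul]
  have hA : A = 0 := by
    have := congrArg Matrix.toBlocks₂₂ hJ
    rw [hJdef, Matrix.toBlocks_fromBlocks₂₂] at this
    rw [this]
    ext i j
    simp [Matrix.toBlocks₂₂]
  have hB : B = 0 := by
    have := congrArg Matrix.toBlocks₂₁ hJ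
    rw [hJdef, Matrix.toBlocks_fromBlocks₂₁] at this
    have h6 : -B = 0 := by
      rw [this]; ext i j; simp [Matrix.toBlocks₂₁]
    simpa [neg_eq_zero] using h6
  have hC : C = 0 := by
    have := congrArg Matrix.toBlocks₁₁ hJ
    rw [hJdef, Matrix.toBlocks_fromBlocks₁₁] at this
    rw [this]
    ext i j
    simp [Matrix.toBlocks₁₁]
  simp [hA, hB, hC, Prod.ext_iff]

lemma mul_vecMulVec_mul (U V : MC g) (a b : Fin g → ℂ) :
    U * (Matrix.vecMulVec a b) * Vᵀ = Matrix.vecMulVec (U *ᵥ a) (V *ᵥ b) := by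
  ext i j
  simp only [Matrix.mul_apply, Matrix.vecMulVec_apply, Matrix.transpose_apply,
    Matrix.mulVec, dotProduct, Finset.sum_mul, Finset.mul_sum]
  exact Finset.sum_congr rfl fun s _ => Finset.sum_congr rfl fun t _ => by ring

lemma vecMulVec_transpose (a b : Fin g → ℂ) :
    (Matrix.vecMulVec a b)ᵀ = Matrix.vecMulVec b a := by
  ext i j
  simp [Matrix.vecMulVec_apply, mul_comm]

lemma Gmap_ne_zero (hg : 2 ≤ g) {U V : MC g} (hUV : U + V = 1) (hU : U ≠ 0) (hV : V ≠ 0) :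
    Gmap U V ≠ 0 := by
  intro hG
  have key' : ∀ (a b : Fin g → ℂ) i j, (U *ᵥ a) i * (V *ᵥ b) j = (V *ᵥ b) i * (U *ᵥ a) j := by
    intro a b i j
    have h := congrFun (congrArg DFunLike.coe hG) (Matrix.vecMulVec a b)
    simp only [Gmap, LinearMap.coe_mk, AddHom.coe_mk, LinearMap.zero_apply] at h
    rw [sub_eq_zero, vecMulVec_transpose, mul_vecMulVec_mul, mul_vecMulVec_mul] at h
    have := congrFun (congrFun h i) j
    simpa [Matrix.vecMulVec_apply] using this
  have hUa : ∃ a i, (U *ᵥ a) i ≠ 0 := by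
    by_contra h
    push_neg at h
    apply hU
    ext i j
    have := h (Pi.single j 1) i
    rw [Matrix.mulVec_single] at this
    simpa using this
  have hVb : ∃ b j, (V *ᵥ b) j ≠ 0 := by
    by_contra h
    push_neg at h
    apply hV
    ext i j
    have := h (Pi.single j 1) i
    rw [Matrix.mulVec_single] at this
    simpa using this
  obtain ⟨a₀, i₀, hp₀⟩ := hUa
  obtain ⟨b₀, j₀, hq₀⟩ := hVb
  set p : Fin g → ℂ := U *ᵥ a₀ with hp
  have hVline : ∀ b, ∃ c : ℂ, V *ᵥ b = c • p := by
    intro b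
    refine ⟨(V *ᵥ b) i₀ / p i₀, ?_⟩
    funext i
    have h1 := key' a₀ b i i₀
    rw [Pi.smul_apply, smul_eq_mul, div_mul_eq_mul_div, eq_div_iff hp₀]
    linear_combination -h1
  have hUline : ∀ a, ∃ c : ℂ, U *ᵥ a = c • p := by
    intro a
    obtain ⟨c₀, hc₀⟩ := hVline b₀
    have hq₀i : (V *ᵥ b₀) i₀ ≠ 0 := by
      intro h
      have : (V *ᵥ b₀) j₀ * p i₀ = 0 := by
        have h1 := key' a₀ b₀ i₀ j₀
        rw [h] at h1
        linear_combination h1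
      rcases mul_eq_zero.mp this with h' | h'
      · exact hq₀ h'
      · exact hp₀ h'
    refine ⟨(U *ᵥ a) i₀ / p i₀, ?_⟩
    funext i
    rw [Pi.smul_apply, smul_eq_mul, div_mul_eq_mul_div, eq_div_iff hp₀]
    -- (U *ᵥ a) i * p i₀ = (U *ᵥ a) i₀ * p i
    -- use key' twice through q₀
    have h1 := key' a b₀ i i₀    -- (U*a) i * q₀ i₀ = q₀ i * (U*a) i₀
    have h2 := key' a₀ b₀ i i₀   -- p i * q₀ i₀ = q₀ i * p i₀
    -- from h2 : q₀ i = p i * q₀ i₀ / p i₀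
    have h3 : (V *ᵥ b₀) i * p i₀ = p i * (V *ᵥ b₀) i₀ := by linear_combination -h2
    -- h1 * p i₀ : (U*a) i * q₀ i₀ * p i₀ = q₀ i * p i₀ * (U*a) i₀ = p i * q₀ i₀ * (U*a) i₀
    have h4 : (U *ᵥ a) i * (V *ᵥ b₀) i₀ * p i₀ = p i * (V *ᵥ b₀) i₀ * (U *ᵥ a) i₀ := by
      calc (U *ᵥ a) i * (V *ᵥ b₀) i₀ * p i₀ = (V *ᵥ b₀) i * (U *ᵥ a) i₀ * p i₀ := by
            rw [h1]
      _ = ((V *ᵥ b₀) i * p i₀) * (U *ᵥ a) i₀ := by ring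
      _ = p i * (V *ᵥ b₀) i₀ * (U *ᵥ a) i₀ := by rw [h3]
    apply mul_right_cancel₀ hq₀i
    linear_combination h4
  have hall : ∀ e : Fin g → ℂ, ∃ c : ℂ, e = c • p := by
    intro e
    obtain ⟨c1, h1⟩ := hUline e
    obtain ⟨c2, h2⟩ := hVline e
    refine ⟨c1 + c2, ?_⟩
    have : (U + V) *ᵥ e = e := by rw [hUV, Matrix.one_mulVec]
    rw [Matrix.add_mulVec, h1, h2] at this
    rw [← this, add_smul]
  set i0 : Fin g := ⟨0, by omega⟩ with hi0
  set i1 : Fin g := ⟨1, by omega⟩ with hi1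
  have h0 : i0 ≠ i1 := by simp [hi0, hi1, Fin.ext_iff]
  obtain ⟨c1, h1⟩ := hall (Pi.single i0 1)
  obtain ⟨c2, h2⟩ := hall (Pi.single i1 1)
  have e10 : (1 : ℂ) = c1 * p i0 := by
    have := congrFun h1 i0
    simpa using this
  have e20 : (0 : ℂ) = c2 * p i0 := by
    have := congrFun h2 i0
    simpa [Pi.single_eq_of_ne h0] using this
  have e21 : (1 : ℂ) = c2 * p i1 := by
    have := congrFun h2 i1
    simpa using this
  have hp0 : p i0 ≠ 0 := fun h => by simp [h] at e10
  have hc2 : c2 = 0 := by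
    rcases mul_eq_zero.mp e20.symm with h | h
    · exact h
    · exact absurd h hp0
  rw [hc2, zero_mul] at e21
  exact one_ne_zero e21

theorem finrank_KC_le (hg : 2 ≤ g) (τ' σ' μ' : MC g)
    (hdet : (τ' - σ').det ≠ 0) (hμτ : μ' ≠ τ') (hμσ : μ' ≠ σ') :
    finrank ℂ ↥(KC τ' σ' μ') ≤ g * g - 1 := by
  have hΔ : IsUnit (τ'ᵀ - σ'ᵀ).det := by
    rw [← Matrix.transpose_sub, Matrix.det_transpose]
    exact hdet.isUnit
  set Δ : MC g := τ'ᵀ - σ'ᵀ with hΔdef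
  set U : MC g := (μ'ᵀ - σ'ᵀ) * Δ⁻¹ with hUdef
  have hUΔ : U * Δ = μ'ᵀ - σ'ᵀ := Matrix.nonsing_inv_mul_cancel_right _ _ hΔ
  have hμT : μ'ᵀ = U * τ'ᵀ + (1 - U) * σ'ᵀ := by
    have h1 : U * τ'ᵀ + (1 - U) * σ'ᵀ = U * Δ + σ'ᵀ := by
      rw [hΔdef]; noncomm_ring
    rw [h1, hUΔ]; noncomm_ring
  have hμ : μ' = τ' * Uᵀ + σ' * (1 - U)ᵀ := by
    have h2 := congrArg Matrix.transpose hμT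
    rw [Matrix.transpose_transpose] at h2
    rw [h2]
    simp only [Matrix.transpose_add, Matrix.transpose_mul, Matrix.transpose_transpose]
  have hU0 : U ≠ 0 := by
    intro h
    apply hμσ
    have h2 : μ'ᵀ - σ'ᵀ = 0 := by rw [← hUΔ, h, Matrix.zero_mul]
    rw [sub_eq_zero] at h2
    have h3 := congrArg Matrix.transpose h2
    simpa [Matrix.transpose_transpose] using h3
  have hV0 : (1 : MC g) - U ≠ 0 := by
    intro h
    apply hμτ
    have hU1 : U = 1 := by
      have := sub_eq_zero.mp h
      exact this.symm
    have h2 : μ'ᵀ - σ'ᵀ = Δ := by rw [← hUΔ, hU1, Matrix.one_mul]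
    rw [hΔdef] at h2
    have h3 : μ'ᵀ = τ'ᵀ := by
      have := sub_left_inj.mp h2
      exact this
    have h4 := congrArg Matrix.transpose h3
    simpa [Matrix.transpose_transpose] using h4
  have hGne : Gmap U (1 - U) ≠ 0 := by
    refine Gmap_ne_zero hg ?_ hU0 hV0
    abel
  have hmem : ∀ x ∈ KC τ' σ' μ', Gmap U (1 - U) (Qmap τ' σ' x) = 0 := by
    intro x hx
    simp only [KC, Submodule.mem_inf] at hx
    obtain ⟨⟨⟨⟨hA, hC⟩, h1⟩, h4⟩, h5⟩ := hx
    have hAs : x.1ᵀ = -x.1 := eq_neg_of_add_eq_zero_left (LinearMap.mem_ker.mp hA)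
    have hCs : x.2.2ᵀ = -x.2.2 := eq_neg_of_add_eq_zero_left (LinearMap.mem_ker.mp hC)
    have hQμ := Q_decompose τ' σ' μ' U hμ x
    rw [LinearMap.mem_ker.mp h5, LinearMap.mem_ker.mp h1, LinearMap.mem_ker.mp h4] at hQμ
    have hst : Qmap σ' τ' x = -(Qmap τ' σ' x)ᵀ := by
      have h6 := Q_transpose τ' σ' x hAs hCs
      have h7 := congrArg Neg.neg h6
      rw [neg_neg] at h7
      exact h7.symm
    rw [hst] at hQμ
    simp only [Matrix.zero_mul, Matrix.mul_zero, zero_add, add_zero] at hQμ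
    have h8 := hQμ.symm
    simp only [Matrix.mul_neg, Matrix.neg_mul] at h8
    rw [← sub_eq_add_neg] at h8
    show U * (Qmap τ' σ' x) * (1 - U)ᵀ - (1 - U) * (Qmap τ' σ' x)ᵀ * Uᵀ = 0
    exact h8
  let φ : ↥(KC τ' σ' μ') →ₗ[ℂ] ↥(LinearMap.ker (Gmap U (1 - U))) :=
    LinearMap.codRestrict _ ((Qmap τ' σ').comp (KC τ' σ' μ').subtype)
      (fun x => LinearMap.mem_ker.mpr (hmem x.1 x.2))
  have hφ : Function.Injective φ := by
    rw [injective_iff_map_eq_zero]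
    intro x hx0
    have hQ0 : Qmap τ' σ' x.1 = 0 := congrArg Subtype.val hx0
    have hx2 := x.2
    simp only [KC, Submodule.mem_inf] at hx2
    obtain ⟨⟨⟨⟨hA, hC⟩, h1⟩, h4⟩, h5⟩ := hx2
    have hAs : x.1.1ᵀ = -x.1.1 := eq_neg_of_add_eq_zero_left (LinearMap.mem_ker.mp hA)
    have hCs : x.1.2.2ᵀ = -x.1.2.2 := eq_neg_of_add_eq_zero_left (LinearMap.mem_ker.mp hC)
    have hst : Qmap σ' τ' x.1 = 0 := by
      have h6 := Q_transpose τ' σ' x.1 hAs hCs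
      have h7 := congrArg Neg.neg h6
      rw [neg_neg] at h7
      rw [← h7, hQ0]
      simp
    have hz := triple_eq_zero hdet x.1 (LinearMap.mem_ker.mp h1) hQ0 hst
      (LinearMap.mem_ker.mp h4)
    exact Subtype.ext hz
  have hle := LinearMap.finrank_le_finrank_of_injective hφ
  have hrn := LinearMap.finrank_range_add_finrank_ker (Gmap U (1 - U))
  have hM : finrank ℂ (MC g) = g * g := by
    rw [Module.finrank_matrix]
    simp
  rw [hM] at hrn
  have hrange : 1 ≤ finrank ℂ ↥(LinearMap.range (Gmap U (1 - U))) := by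
    by_contra h
    push_neg at h
    have h0 : finrank ℂ ↥(LinearMap.range (Gmap U (1 - U))) = 0 := by omega
    rw [Submodule.finrank_eq_zero] at h0
    exact hGne (LinearMap.range_eq_bot.mp h0)
  omega


abbrev MQ (g : ℕ) := Matrix (Fin g) (Fin g) ℚ
abbrev MC' (g : ℕ) := Matrix (Fin g) (Fin g) ℂ
abbrev DQ (g : ℕ) := MQ g × MQ g × MQ g

variable (g : ℕ) (τ : Matrix (Fin g) (Fin g) ℂ)

def LC : DQ g →ₗ[ℚ] MC' g where
  toFun x := mapQC g x.1 - mapQC g x.2.1 * τ + τᵀ * (mapQC g x.2.1)ᵀ + τᵀ * mapQC g x.2.2 * τ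
  map_add' a b := by
    simp only [Prod.fst_add, Prod.snd_add, map_add, Matrix.add_mul, Matrix.mul_add,
      Matrix.transpose_add]
    abel
  map_smul' q a := by
    simp only [Prod.smul_fst, Prod.smul_snd, _root_.map_smul, Matrix.transpose_smul,
      smul_mul_assoc, mul_smul_comm, RingHom.id_apply]
    module

lemma mapQC_apply (M : MQ g) (i j : Fin g) : mapQC g M i j = algebraMap ℚ ℂ (M i j) := rfl

lemma tau_mem (i j : Fin g) : τ i j ∈ EntryField g τ :=
  IntermediateField.subset_adjoin _ _ ⟨i, j, rfl⟩

lemma LC_entry_mem (x : DQ g) (i j : Fin g) : LC g τ x i j ∈ EntryField g τ := by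
  have hτ : ∀ a b, τ a b ∈ EntryField g τ := tau_mem g τ
  have hQ : ∀ (M : MQ g) a b, mapQC g M a b ∈ EntryField g τ := fun M a b => by
    rw [mapQC_apply]
    exact (EntryField g τ).algebraMap_mem _
  show (mapQC g x.1 - mapQC g x.2.1 * τ + τᵀ * (mapQC g x.2.1)ᵀ + τᵀ * mapQC g x.2.2 * τ) i j
    ∈ EntryField g τ
  simp only [Matrix.add_apply, Matrix.sub_apply]
  refine add_mem (add_mem (sub_mem (hQ _ _ _) ?_) ?_) ?_
  · rw [Matrix.mul_apply]
    exact sum_mem fun k _ => mul_mem (hQ _ _ _) (hτ _ _)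
  · rw [Matrix.mul_apply]
    refine sum_mem fun k _ => mul_mem ?_ ?_
    · rw [Matrix.transpose_apply]; exact hτ _ _
    · rw [Matrix.transpose_apply]; exact hQ _ _ _
  · rw [Matrix.mul_apply]
    refine sum_mem fun k _ => mul_mem ?_ (hτ _ _)
    rw [Matrix.mul_apply]
    refine sum_mem fun l _ => mul_mem ?_ (hQ _ _ _)
    rw [Matrix.transpose_apply]; exact hτ _ _

abbrev UpIdx (g : ℕ) := {p : Fin g × Fin g // p.1 < p.2}

def Phi : DQ g →ₗ[ℚ] ((UpIdx g ⊕ Fin g → ℚ) × (UpIdx g ⊕ Fin g → ℚ) ×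
    (UpIdx g → EntryField g τ)) where
  toFun x := (Sum.elim (fun p => (x.1ᵀ + x.1) p.1.1 p.1.2) (fun i => (x.1ᵀ + x.1) i i),
    Sum.elim (fun p => (x.2.2ᵀ + x.2.2) p.1.1 p.1.2) (fun i => (x.2.2ᵀ + x.2.2) i i),
    fun p => ⟨LC g τ x p.1.1 p.1.2, LC_entry_mem g τ x p.1.1 p.1.2⟩)
  map_add' a b := by
    refine Prod.ext ?_ (Prod.ext ?_ ?_)
    · funext t
      cases t <;> simp [Matrix.transpose_apply, Matrix.add_apply] <;> ring
    · funext t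
      cases t <;> simp [Matrix.transpose_apply, Matrix.add_apply] <;> ring
    · funext p
      apply Subtype.ext
      show LC g τ (a + b) p.1.1 p.1.2 = ((⟨_, _⟩ : EntryField g τ) + ⟨_, _⟩ : EntryField g τ).1
      rw [map_add]
      rfl
  map_smul' q a := by
    refine Prod.ext ?_ (Prod.ext ?_ ?_)
    · funext t
      cases t <;> simp [Matrix.transpose_apply, Matrix.add_apply] <;> ring
    · funext t
      cases t <;> simp [Matrix.transpose_apply, Matrix.add_apply] <;> ring
    · funext p
      apply Subtype.ext
      show LC g τ (q • a) p.1.1 p.1.2 = (q • (⟨_, _⟩ : EntryField g τ)).1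
      rw [_root_.map_smul]
      rfl

lemma mapQC_transpose (M : MQ g) : (mapQC g M)ᵀ = mapQC g Mᵀ := by
  ext i j
  rfl

lemma LC_transpose (x : DQ g) (hA : x.1ᵀ = -x.1) (hC : x.2.2ᵀ = -x.2.2) :
    (LC g τ x)ᵀ = -(LC g τ x) := by
  have hA' : (mapQC g x.1)ᵀ = -(mapQC g x.1) := by
    rw [mapQC_transpose, hA, map_neg]
  have hC' : (mapQC g x.2.2)ᵀ = -(mapQC g x.2.2) := by
    rw [mapQC_transpose, hC, map_neg]
  show (mapQC g x.1 - mapQC g x.2.1 * τ + τᵀ * (mapQC g x.2.1)ᵀ + τᵀ * mapQC g x.2.2 * τ)ᵀ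
    = -(mapQC g x.1 - mapQC g x.2.1 * τ + τᵀ * (mapQC g x.2.1)ᵀ + τᵀ * mapQC g x.2.2 * τ)
  simp only [Matrix.transpose_add, Matrix.transpose_sub, Matrix.transpose_mul,
    Matrix.transpose_transpose, hA', hC']
  noncomm_ring

lemma NSSpace_eq_ker : NSSpace g τ = LinearMap.ker (Phi g τ) := by
  ext x
  constructor
  · rintro ⟨h1, h2, h3⟩
    rw [LinearMap.mem_ker]
    have hL : LC g τ x = 0 := h3
    refine Prod.ext ?_ (Prod.ext ?_ ?_)
    · funext t
      cases t with
      | inl p => show (x.1ᵀ + x.1) _ _ = _; rw [h1]; simp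
      | inr i => show (x.1ᵀ + x.1) _ _ = _; rw [h1]; simp
    · funext t
      cases t with
      | inl p => show (x.2.2ᵀ + x.2.2) _ _ = _; rw [h2]; simp
      | inr i => show (x.2.2ᵀ + x.2.2) _ _ = _; rw [h2]; simp
    · funext p
      apply Subtype.ext
      show LC g τ x _ _ = _
      rw [hL]
      simp
  · intro hx
    rw [LinearMap.mem_ker] at hx
    have h1 := congrArg Prod.fst hx
    have h2 := congrArg (fun y : ((UpIdx g ⊕ Fin g → ℚ) × (UpIdx g ⊕ Fin g → ℚ) ×
      (UpIdx g → EntryField g τ)) => y.2.1) hx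
    have h3 := congrArg (fun y : ((UpIdx g ⊕ Fin g → ℚ) × (UpIdx g ⊕ Fin g → ℚ) ×
      (UpIdx g → EntryField g τ)) => y.2.2) hx
    have hA : x.1ᵀ = -x.1 := by
      ext i j
      rw [Matrix.transpose_apply, Matrix.neg_apply]
      rcases lt_trichotomy i j with h | h | h
      · have := congrFun h1 (Sum.inl ⟨(i, j), h⟩)
        have h5 : (x.1ᵀ + x.1) i j = 0 := this
        rw [Matrix.add_apply, Matrix.transpose_apply] at h5
        linarith
      · subst h
        have := congrFun h1 (Sum.inr i)
        have h5 : (x.1ᵀ + x.1) i i = 0 := this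
        rw [Matrix.add_apply, Matrix.transpose_apply] at h5
        linarith
      · have := congrFun h1 (Sum.inl ⟨(j, i), h⟩)
        have h5 : (x.1ᵀ + x.1) j i = 0 := this
        rw [Matrix.add_apply, Matrix.transpose_apply] at h5
        linarith
    have hC : x.2.2ᵀ = -x.2.2 := by
      ext i j
      rw [Matrix.transpose_apply, Matrix.neg_apply]
      rcases lt_trichotomy i j with h | h | h
      · have := congrFun h2 (Sum.inl ⟨(i, j), h⟩)
        have h5 : (x.2.2ᵀ + x.2.2) i j = 0 := this
        rw [Matrix.add_apply, Matrix.transpose_apply] at h5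
        linarith
      · subst h
        have := congrFun h2 (Sum.inr i)
        have h5 : (x.2.2ᵀ + x.2.2) i i = 0 := this
        rw [Matrix.add_apply, Matrix.transpose_apply] at h5
        linarith
      · have := congrFun h2 (Sum.inl ⟨(j, i), h⟩)
        have h5 : (x.2.2ᵀ + x.2.2) j i = 0 := this
        rw [Matrix.add_apply, Matrix.transpose_apply] at h5
        linarith
    have hup : ∀ p : UpIdx g, LC g τ x p.1.1 p.1.2 = 0 := by
      intro p
      have := congrFun h3 p
      have h6 : (⟨LC g τ x p.1.1 p.1.2, LC_entry_mem g τ x p.1.1 p.1.2⟩ : EntryField g τ)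
          = 0 := this
      exact congrArg Subtype.val h6
    have hLT := LC_transpose g τ x hA hC
    have hL : LC g τ x = 0 := by
      ext i j
      rw [Matrix.zero_apply]
      rcases lt_trichotomy i j with h | h | h
      · exact hup ⟨(i, j), h⟩
      · subst h
        have h7 := congrFun (congrFun hLT i) i
        rw [Matrix.transpose_apply, Matrix.neg_apply] at h7
        have : LC g τ x i i + LC g τ x i i = 0 := by
          linear_combination h7
        exact add_self_eq_zero.mp this
      · have h7 := congrFun (congrFun hLT j) i
        rw [Matrix.transpose_apply, Matrix.neg_apply] at h7
        rw [h7, hup ⟨(j, i), h⟩, neg_zero]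
    exact ⟨hA, hC, hL⟩

theorem picard_lower (hdeg : finrank ℚ (EntryField g τ) = 4) : g ≤ picard g τ := by
  have hFD : FiniteDimensional ℚ (EntryField g τ) :=
    Module.finite_of_finrank_pos (by rw [hdeg]; norm_num)
  have hker : NSSpace g τ = LinearMap.ker (Phi g τ) := NSSpace_eq_ker g τ
  have hrn := LinearMap.finrank_range_add_finrank_ker (Phi g τ)
  have hD : finrank ℚ (DQ g) = 3 * (g * g) := by
    rw [Module.finrank_prod, Module.finrank_prod]
    simp [Module.finrank_matrix, Module.finrank_self, Fintype.card_fin]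
    ring
  have hT : finrank ℚ ((UpIdx g ⊕ Fin g → ℚ) × (UpIdx g ⊕ Fin g → ℚ) ×
      (UpIdx g → EntryField g τ))
      = (Fintype.card (UpIdx g) + g) + ((Fintype.card (UpIdx g) + g)
        + Fintype.card (UpIdx g) * 4) := by
    rw [Module.finrank_prod, Module.finrank_prod, Module.finrank_pi,
      Module.finrank_pi_fintype]
    simp only [hdeg, Finset.sum_const, smul_eq_mul, Finset.card_univ]
    simp [Fintype.card_sum, Fintype.card_fin]
  have hrange := Submodule.finrank_le (LinearMap.range (Phi g τ))
  rw [hT] at hrange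
  rw [hD] at hrn
  have heq : finrank ℚ ↥(NSSpace g τ) = finrank ℚ ↥(LinearMap.ker (Phi g τ)) :=
    congrArg (fun S : Submodule ℚ (DQ g) => finrank ℚ ↥S) hker
  have hcard : Fintype.card (UpIdx g) + Fintype.card (UpIdx g) + g = g * g :=
    card_strict_upper g
  show g ≤ finrank ℚ (NSSpace g τ)
  omega


def tauF : Matrix (Fin g) (Fin g) (EntryField g τ) := fun i j => ⟨τ i j, tau_mem g τ i j⟩

def conjHom : EntryField g τ →ₐ[ℚ] ℂ :=
  (((starRingEnd ℂ) : ℂ →+* ℂ).toRatAlgHom).comp (EntryField g τ).val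

lemma tauF_map_val : (tauF g τ).map (EntryField g τ).val = τ := by
  ext i j
  rfl

lemma tauF_map_conj : (tauF g τ).map (conjHom g τ) = τ.map (starRingEnd ℂ) := by
  ext i j
  rfl

def psiC (x : DQ g) : DC g := (mapQC g x.1, mapQC g x.2.1, mapQC g x.2.2)

lemma Q_tauF_zero (x : DQ g) (hx : x ∈ NSSpace g τ) (s : EntryField g τ →ₐ[ℚ] ℂ) :
    Qmap ((tauF g τ).map s) ((tauF g τ).map s) (psiC g x) = 0 := by
  classical
  set mapQF : MQ g → Matrix (Fin g) (Fin g) (EntryField g τ) :=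
    fun M => M.map (algebraMap ℚ (EntryField g τ)) with hmapQF
  set EF : Matrix (Fin g) (Fin g) (EntryField g τ) := mapQF x.1 - mapQF x.2.1 * tauF g τ
      + (tauF g τ)ᵀ * (mapQF x.2.1)ᵀ + (tauF g τ)ᵀ * mapQF x.2.2 * tauF g τ with hEF
  have hmap : ∀ (t : EntryField g τ →ₐ[ℚ] ℂ),
      EF.map t = Qmap ((tauF g τ).map t) ((tauF g τ).map t) (psiC g x) := by
    intro t
    have hT : ∀ P : Matrix (Fin g) (Fin g) (EntryField g τ),
        (AlgHom.mapMatrix t) Pᵀ = ((AlgHom.mapMatrix t) P)ᵀ := by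
      intro P
      simp [AlgHom.mapMatrix_apply, Matrix.transpose_map]
    have h1 : ∀ M : MQ g, (AlgHom.mapMatrix t) (mapQF M) = mapQC g M := by
      intro M
      ext i j
      simp [AlgHom.mapMatrix_apply, Matrix.map_apply, hmapQF, mapQC_apply]
    have h2 : (AlgHom.mapMatrix t) (tauF g τ) = (tauF g τ).map t := by
      simp [AlgHom.mapMatrix_apply]
    calc EF.map t = (AlgHom.mapMatrix t) EF := by simp [AlgHom.mapMatrix_apply]
    _ = mapQC g x.1 - mapQC g x.2.1 * ((tauF g τ).map t)
        + ((tauF g τ).map t)ᵀ * (mapQC g x.2.1)ᵀ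
        + ((tauF g τ).map t)ᵀ * mapQC g x.2.2 * ((tauF g τ).map t) := by
      rw [hEF, map_add, map_add, map_sub, _root_.map_mul, _root_.map_mul,
        _root_.map_mul, _root_.map_mul, hT, hT, h1, h1, h1, h2]
    _ = Qmap ((tauF g τ).map t) ((tauF g τ).map t) (psiC g x) := by
      rw [Qmap_apply]
      rfl
  have h0 : EF.map (EntryField g τ).val = 0 := by
    erw [hmap (EntryField g τ).val, tauF_map_val]
    exact hx.2.2
  have hEF0 : EF = 0 := by
    ext i j
    have h5 := congrFun (congrFun h0 i) j
    rw [Matrix.map_apply, Matrix.zero_apply] at h5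
    simpa using h5
  rw [← hmap s, hEF0]
  ext i j
  simp [Matrix.map_apply]

lemma mem_KC (x : DQ g) (hx : x ∈ NSSpace g τ) (s : EntryField g τ →ₐ[ℚ] ℂ) :
    psiC g x ∈ KC τ (τ.map (starRingEnd ℂ)) ((tauF g τ).map s) := by
  obtain ⟨h1, h2, h3⟩ := hx
  have hskew1 : skewA (psiC g x) = 0 := by
    show (mapQC g x.1)ᵀ + mapQC g x.1 = 0
    rw [mapQC_transpose, h1, map_neg]
    abel
  have hskew2 : skewC (psiC g x) = 0 := by
    show (mapQC g x.2.2)ᵀ + mapQC g x.2.2 = 0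
    rw [mapQC_transpose, h2, map_neg]
    abel
  have hQτ : Qmap τ τ (psiC g x) = 0 := h3
  have hQσ : Qmap (τ.map (starRingEnd ℂ)) (τ.map (starRingEnd ℂ)) (psiC g x) = 0 := by
    rw [← tauF_map_conj]
    exact Q_tauF_zero g τ x ⟨h1, h2, h3⟩ (conjHom g τ)
  have hQμ : Qmap ((tauF g τ).map s) ((tauF g τ).map s) (psiC g x) = 0 :=
    Q_tauF_zero g τ x ⟨h1, h2, h3⟩ s
  simp only [KC, Submodule.mem_inf, LinearMap.mem_ker]
  exact ⟨⟨⟨⟨hskew1, hskew2⟩, hQτ⟩, hQσ⟩, hQμ⟩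

lemma algHom_determined {s₁ s₂ : EntryField g τ →ₐ[ℚ] ℂ}
    (h : ∀ i j, s₁ (tauF g τ i j) = s₂ (tauF g τ i j)) : s₁ = s₂ := by
  apply IntermediateField.adjoin_algHom_ext
  intro x hx
  obtain ⟨i, j, rfl⟩ := hx
  exact h i j

lemma exists_third (hdeg : Module.finrank ℚ (EntryField g τ) = 4) :
    ∃ s : EntryField g τ →ₐ[ℚ] ℂ,
      (tauF g τ).map s ≠ τ ∧ (tauF g τ).map s ≠ τ.map (starRingEnd ℂ) := by
  classical
  haveI hFD : FiniteDimensional ℚ (EntryField g τ) :=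
    Module.finite_of_finrank_pos (by rw [hdeg]; norm_num)
  by_contra hcon
  push_neg at hcon
  have hsub : ∀ s : EntryField g τ →ₐ[ℚ] ℂ, s = (EntryField g τ).val ∨ s = conjHom g τ := by
    intro s
    by_cases h : (tauF g τ).map s = τ
    · left
      apply algHom_determined
      intro i j
      have h5 := congrFun (congrFun h i) j
      have h6 := congrFun (congrFun (tauF_map_val g τ) i) j
      rw [Matrix.map_apply] at h5 h6
      exact h5.trans h6.symm
    · right
      have h2 := hcon s h
      apply algHom_determined
      intro i j
      have h5 := congrFun (congrFun h2 i) j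
      have h6 := congrFun (congrFun (tauF_map_conj g τ) i) j
      rw [Matrix.map_apply] at h5 h6
      rw [h5, ← h6]
  have hcard : Fintype.card (EntryField g τ →ₐ[ℚ] ℂ) = 4 := by
    rw [AlgHom.card]
    exact hdeg
  have hle : Fintype.card (EntryField g τ →ₐ[ℚ] ℂ) ≤ 2 := by
    have hss : (Finset.univ : Finset (EntryField g τ →ₐ[ℚ] ℂ))
        ⊆ {(EntryField g τ).val, conjHom g τ} := by
      intro s _
      rcases hsub s with h | h
      · rw [h]; exact Finset.mem_insert_self _ _
      · rw [h]; exact Finset.mem_insert_of_mem (Finset.mem_singleton_self _)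
    calc Fintype.card (EntryField g τ →ₐ[ℚ] ℂ)
        = (Finset.univ : Finset (EntryField g τ →ₐ[ℚ] ℂ)).card := (Finset.card_univ).symm
    _ ≤ ({(EntryField g τ).val, conjHom g τ} : Finset _).card := Finset.card_le_card hss
    _ ≤ 2 := by
      apply (Finset.card_insert_le _ _).trans
      simp
  omega

lemma det_sub_conj_ne (him : (τ.map Complex.im).det ≠ 0) :
    (τ - τ.map (starRingEnd ℂ)).det ≠ 0 := by
  have hEq : τ - τ.map (starRingEnd ℂ)
      = ((2 * Complex.I) : ℂ) • ((τ.map Complex.im).map Complex.ofRealHom) := by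
    ext i j
    rw [Matrix.sub_apply, Matrix.smul_apply, Matrix.map_apply, Matrix.map_apply,
      Matrix.map_apply, Complex.sub_conj, smul_eq_mul, Complex.ofRealHom_eq_coe]
    push_cast
    ring
  rw [hEq, Matrix.det_smul]
  have h2 : ((τ.map Complex.im).map Complex.ofRealHom).det
      = Complex.ofRealHom (τ.map Complex.im).det := by
    rw [show (τ.map Complex.im).map Complex.ofRealHom
        = Complex.ofRealHom.mapMatrix (τ.map Complex.im) from rfl]
    exact (RingHom.map_det Complex.ofRealHom (τ.map Complex.im)).symm
  rw [h2]
  apply mul_ne_zero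
  · apply pow_ne_zero
    simp [Complex.I_ne_zero]
  · simpa using him

abbrev Idx (g : ℕ) := (Fin g × Fin g) ⊕ ((Fin g × Fin g) ⊕ (Fin g × Fin g))

def flatQ : DQ g →ₗ[ℚ] (Idx g → ℚ) where
  toFun x := Sum.elim (fun p => x.1 p.1 p.2)
    (Sum.elim (fun p => x.2.1 p.1 p.2) (fun p => x.2.2 p.1 p.2))
  map_add' a b := by
    funext t
    rcases t with p | p | p <;> simp
  map_smul' q a := by
    funext t
    rcases t with p | p | p <;> simp

def flatC : DC g →ₗ[ℂ] (Idx g → ℂ) where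
  toFun x := Sum.elim (fun p => x.1 p.1 p.2)
    (Sum.elim (fun p => x.2.1 p.1 p.2) (fun p => x.2.2 p.1 p.2))
  map_add' a b := by
    funext t
    rcases t with p | p | p <;> simp
  map_smul' q a := by
    funext t
    rcases t with p | p | p <;> simp

lemma flatQ_ker : LinearMap.ker (flatQ g) = ⊥ := by
  rw [Submodule.eq_bot_iff]
  intro x hx
  rw [LinearMap.mem_ker] at hx
  refine Prod.ext ?_ (Prod.ext ?_ ?_)
  · ext i j; exact congrFun hx (Sum.inl (i, j))
  · ext i j; exact congrFun hx (Sum.inr (Sum.inl (i, j)))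
  · ext i j; exact congrFun hx (Sum.inr (Sum.inr (i, j)))

theorem picard_upper (hg : 2 ≤ g) (him : (τ.map Complex.im).det ≠ 0)
    (hdeg : Module.finrank ℚ (EntryField g τ) = 4) : picard g τ < g ^ 2 := by
  classical
  obtain ⟨s₃, hs₁, hs₂⟩ := exists_third g τ hdeg
  set σ' : MC g := τ.map (starRingEnd ℂ) with hσ'
  set μ' : MC g := (tauF g τ).map s₃ with hμ'
  have hdet : (τ - σ').det ≠ 0 := det_sub_conj_ne g τ him
  have hKle : finrank ℂ ↥(KC τ σ' μ') ≤ g * g - 1 :=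
    finrank_KC_le hg τ σ' μ' hdet hs₁ hs₂
  -- now show picard g τ ≤ finrank ℂ (KC τ σ' μ')
  set r := Module.finrank ℚ (NSSpace g τ) with hr
  let b := Module.finBasis ℚ ↥(NSSpace g τ)
  have hbl : LinearIndependent ℚ (fun i : Fin r => flatQ g ((b i : DQ g))) := by
    have h1 := b.linearIndependent
    have h2 := h1.map' (NSSpace g τ).subtype (Submodule.ker_subtype _)
    exact h2.map' (flatQ g) (flatQ_ker g)
  have hcl := indep_base_change _ hbl
  have hw : ∀ i : Fin r, (fun t => ((flatQ g ((b i : DQ g)) t : ℚ) : ℂ))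
      ∈ (KC τ σ' μ').map (flatC g) := by
    intro i
    refine ⟨psiC g (b i : DQ g), mem_KC g τ _ (b i).2 s₃, ?_⟩
    funext t
    rcases t with p | p | p <;>
      simp [flatC, flatQ, psiC, mapQC_apply, eq_ratCast]
  have hfin : FiniteDimensional ℂ ↥((KC τ σ' μ').map (flatC g)) := inferInstance
  have hcount : r ≤ finrank ℂ ↥((KC τ σ' μ').map (flatC g)) := by
    have hu : LinearIndependent ℂ (fun i : Fin r =>
        (⟨_, hw i⟩ : ↥((KC τ σ' μ').map (flatC g)))) := by
      apply LinearIndependent.of_comp ((KC τ σ' μ').map (flatC g)).subtype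
      exact hcl
    have := hu.fintype_card_le_finrank
    simpa using this
  have hmaple : finrank ℂ ↥((KC τ σ' μ').map (flatC g)) ≤ finrank ℂ ↥(KC τ σ' μ') :=
    Submodule.finrank_map_le _ _
  have hfinal : picard g τ ≤ g * g - 1 := by
    rw [picard]
    omega
  have hgg : 1 ≤ g * g := by nlinarith
  rw [pow_two]
  omega


theorem picard_bounds_of_deg_four
    (g : ℕ) (hg : 2 ≤ g) (τ : Matrix (Fin g) (Fin g) ℂ)
    (him : (τ.map Complex.im).det ≠ 0)
    (hdeg : Module.finrank ℚ (EntryField g τ) = 4) :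
    g ≤ picard g τ ∧ picard g τ < g ^ 2 := by
  exact ⟨picard_lower g τ hdeg, picard_upper g τ hg him hdeg⟩

end
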